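/- Let X₁, X₂, Y₁ be jointly independent real-valued random variables on a probability space such that P(X₁ > t) ≤ P(X₂ > t) for all t ∈ ℝ (i.e., X₁ ≤_st X₂). Then for all t ∈ ℝ, P(min(max(X₁,Y₁), X₂) > t) ≥ P(min(X₁, max(X₂,Y₁)) > t); that is, T^{[I]} = min(max(X₁,Y₁), X₂) is stochastically larger than T^{[II]} = min(X₁, max(X₂,Y₁)). -/

import Mathlib

open MeasureTheory ProbabilityTheory

/-- For a 2-component series system with jointly independent component lifetimes
`X₁, X₂` and spare `Y₁`, if `X₁ ≤_st X₂`, then the active-redundancy policy putting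
the spare in parallel to `X₁` is stochastically better:
`min(max(X₁,Y₁), X₂) ≥_st min(X₁, max(X₂,Y₁))`. -/
theorem stmt_5 {Ω : Type*} [MeasurableSpace Ω] (μ : Measure Ω) [IsProbabilityMeasure μ]
    (X₁ X₂ Y₁ : Ω → ℝ)
    (hX₁ : Measurable X₁) (hX₂ : Measurable X₂) (hY₁ : Measurable Y₁)
    (hindep : iIndepFun (m := fun _ => Real.measurableSpace) ![X₁, X₂, Y₁] μ)
    (hst : ∀ t : ℝ, μ {ω | X₁ ω > t} ≤ μ {ω | X₂ ω > t}) :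
    ∀ t : ℝ,
      μ {ω | min (X₁ ω) (max (X₂ ω) (Y₁ ω)) > t} ≤
        μ {ω | min (max (X₁ ω) (Y₁ ω)) (X₂ ω) > t} := by
  intro t
  set A : Set Ω := X₁ ⁻¹' Set.Ioi t with hA
  set B : Set Ω := X₂ ⁻¹' Set.Ioi t with hB
  set C : Set Ω := Y₁ ⁻¹' Set.Ioi t with hC
  have mA : MeasurableSet A := hX₁ measurableSet_Ioi
  have mB : MeasurableSet B := hX₂ measurableSet_Ioi
  have mC : MeasurableSet C := hY₁ measurableSet_Ioi
  -- pairwise independence products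
  have hAC : μ (A ∩ C) = μ A * μ C := by
    have h := (hindep.indepFun (i := 0) (j := 2) (by decide)).measure_inter_preimage_eq_mul
      (Set.Ioi t) (Set.Ioi t) measurableSet_Ioi measurableSet_Ioi
    simpa [Matrix.cons_val_zero, Matrix.cons_val_two] using h
  have hBC : μ (B ∩ C) = μ B * μ C := by
    have h := (hindep.indepFun (i := 1) (j := 2) (by decide)).measure_inter_preimage_eq_mul
      (Set.Ioi t) (Set.Ioi t) measurableSet_Ioi measurableSet_Ioi
    simpa [Matrix.cons_val_one, Matrix.cons_val_two] using h
  -- set identities for the events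
  have hset1 : {ω | min (X₁ ω) (max (X₂ ω) (Y₁ ω)) > t} = A ∩ (B ∪ C) := by
    ext ω
    simp [hA, hB, hC, lt_min_iff, lt_max_iff, and_or_left]
  have hset2 : {ω | min (max (X₁ ω) (Y₁ ω)) (X₂ ω) > t} = (A ∪ C) ∩ B := by
    ext ω
    simp [hA, hB, hC, lt_min_iff, lt_max_iff, or_and_right]
  rw [hset1, hset2]
  -- inclusion-exclusion identities
  have e1 : μ (A ∩ (B ∪ C)) + μ (A ∩ B ∩ C) = μ (A ∩ B) + μ (A ∩ C) := by
    have h := measure_union_add_inter (μ := μ) (A ∩ B) (mA.inter mC)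
    have h1 : (A ∩ B) ∪ (A ∩ C) = A ∩ (B ∪ C) := (Set.inter_union_distrib_left A B C).symm
    have h2 : (A ∩ B) ∩ (A ∩ C) = A ∩ B ∩ C := by
      ext ω; simp [hA]; tauto
    rwa [h1, h2] at h
  have e2 : μ ((A ∪ C) ∩ B) + μ (A ∩ B ∩ C) = μ (A ∩ B) + μ (B ∩ C) := by
    have h := measure_union_add_inter (μ := μ) (A ∩ B) (mB.inter mC)
    have h1 : (A ∩ B) ∪ (B ∩ C) = (A ∪ C) ∩ B := by
      ext ω; simp; tauto
    have h2 : (A ∩ B) ∩ (B ∩ C) = A ∩ B ∩ C := by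
      ext ω; simp; tauto
    rwa [h1, h2] at h
  have key : μ (A ∩ C) ≤ μ (B ∩ C) := by
    rw [hAC, hBC]
    exact mul_le_mul_left (hst t) (μ C)
  have hfin : μ (A ∩ B ∩ C) ≠ ⊤ := measure_ne_top μ _
  rw [← ENNReal.add_le_add_iff_right hfin, e1, e2]
  exact add_le_add_right key _
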